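/- Let G be a finite group acting transitively on a finite set Ω, let α ∈ Ω with stabilizer H = G_α, and let K ≤ H be a subgroup. Suppose the set of G-conjugates of K that are contained in H is the disjoint union of exactly t H-conjugacy classes, with representatives K₁, …, K_t. Then the number of points ω ∈ Ω fixed by every element of K equals ∑_{i=1}^t |N_G(K_i)| / |N_H(K_i)|, where N_H(K_i) = N_G(K_i) ∩ H. In particular, if t = 1, this number equals the index |N_G(K) : N_H(K)|. -/

import Mathlib

/-- The conjugate `g K g⁻¹` of a subgroup `K` by the element `g`. -/
def conjSubgroup {G : Type*} [Group G] (g : G) (K : Subgroup G) : Subgroup G :=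
  K.map (MulAut.conj g).toMonoidHom

section Aux

variable {G : Type*} [Group G]

theorem mem_conjSubgroup {g x : G} {K : Subgroup G} :
    x ∈ conjSubgroup g K ↔ g⁻¹ * x * g ∈ K := by
  simp only [conjSubgroup, Subgroup.mem_map, MulEquiv.coe_toMonoidHom, MulAut.conj_apply]
  constructor
  · rintro ⟨y, hy, rfl⟩
    have : g⁻¹ * (g * y * g⁻¹) * g = y := by group
    rwa [this]
  · intro h
    exact ⟨g⁻¹ * x * g, h, by group⟩

theorem conjSubgroup_conjSubgroup (a b : G) (K : Subgroup G) :
    conjSubgroup a (conjSubgroup b K) = conjSubgroup (a * b) K := by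
  ext x
  rw [mem_conjSubgroup, mem_conjSubgroup, mem_conjSubgroup,
    show b⁻¹ * (a⁻¹ * x * a) * b = (a * b)⁻¹ * x * (a * b) by group]

theorem conjSubgroup_one (K : Subgroup G) : conjSubgroup 1 K = K := by
  ext x; simp [mem_conjSubgroup]

theorem conjSubgroup_inv_conjSubgroup (g : G) (K : Subgroup G) :
    conjSubgroup g⁻¹ (conjSubgroup g K) = K := by
  rw [conjSubgroup_conjSubgroup, inv_mul_cancel, conjSubgroup_one]

theorem conjSubgroup_conjSubgroup_inv (g : G) (K : Subgroup G) :
    conjSubgroup g (conjSubgroup g⁻¹ K) = K := by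
  rw [conjSubgroup_conjSubgroup, mul_inv_cancel, conjSubgroup_one]

theorem conjSubgroup_eq_iff_mem_normalizer {n : G} {K : Subgroup G} :
    conjSubgroup n K = K ↔ n ∈ (Subgroup.normalizer (K : Set G)) := by
  rw [Subgroup.mem_normalizer_iff]
  constructor
  · intro h x
    constructor
    · intro hx
      rw [← h, mem_conjSubgroup, show n⁻¹ * (n * x * n⁻¹) * n = x by group]
      exact hx
    · intro hx
      rw [← h, mem_conjSubgroup, show n⁻¹ * (n * x * n⁻¹) * n = x by group] at hx
      exact hx
  · intro h
    ext x
    rw [mem_conjSubgroup]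
    constructor
    · intro hx
      have := (h (n⁻¹ * x * n)).1 hx
      rwa [show n * (n⁻¹ * x * n) * n⁻¹ = x by group] at this
    · intro hx
      have := (h (n⁻¹ * x * n)).2
      rw [show n * (n⁻¹ * x * n) * n⁻¹ = x by group] at this
      exact this hx

theorem conjSubgroup_inf (g : G) (A B : Subgroup G) :
    conjSubgroup g (A ⊓ B) = conjSubgroup g A ⊓ conjSubgroup g B := by
  ext x; simp [mem_conjSubgroup, Subgroup.mem_inf]

theorem normalizer_conjSubgroup (g : G) (K : Subgroup G) :
    (Subgroup.normalizer ((conjSubgroup g K) : Set G)) = conjSubgroup g (Subgroup.normalizer (K : Set G)) := by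
  ext x
  rw [mem_conjSubgroup, ← conjSubgroup_eq_iff_mem_normalizer,
    ← conjSubgroup_eq_iff_mem_normalizer]
  constructor
  · intro h
    have := congrArg (conjSubgroup g⁻¹) h
    rwa [conjSubgroup_conjSubgroup, conjSubgroup_conjSubgroup, conjSubgroup_conjSubgroup,
      inv_mul_cancel, conjSubgroup_one] at this
  · intro h
    have := congrArg (conjSubgroup g) h
    rw [conjSubgroup_conjSubgroup,
      show g * (g⁻¹ * x * g) = x * g by group] at this
    rw [conjSubgroup_conjSubgroup]
    exact this

theorem card_conjSubgroup (g : G) (K : Subgroup G) :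
    Nat.card (conjSubgroup g K) = Nat.card K :=
  (Nat.card_congr (K.equivMapOfInjective _ (MulAut.conj g).injective).toEquiv).symm

end Aux

section Counting

theorem nat_card_fibers {A : Type*} [Finite A] {t : ℕ} (f : A → Fin t) :
    Nat.card A = ∑ i : Fin t, Nat.card {a : A // f a = i} := by
  classical
  cases nonempty_fintype A
  simp only [Nat.card_eq_fintype_card]
  rw [← Fintype.card_sigma]
  exact Fintype.card_congr (Equiv.sigmaFiberEquiv f).symm

theorem card_quot_div {G : Type*} [Group G] [Finite G] (N T : Subgroup G) (hTN : T ≤ N) :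
    Nat.card (↥N ⧸ T.subgroupOf N) = Nat.card N / Nat.card T := by
  have h1 : Nat.card N = Nat.card (↥N ⧸ T.subgroupOf N) * Nat.card (T.subgroupOf N) :=
    Subgroup.card_eq_card_quotient_mul_card_subgroup _
  have h2 : Nat.card (T.subgroupOf N) = Nat.card T :=
    Nat.card_congr (Subgroup.subgroupOfEquivOfLe hTN).toEquiv
  have h3 : 0 < Nat.card T := Nat.card_pos
  rw [h2] at h1
  rw [h1, Nat.mul_div_cancel _ h3]

theorem relIndex_eq_div {G : Type*} [Group G] [Finite G] (H N : Subgroup G) :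
    H.relIndex N = Nat.card N / Nat.card (N ⊓ H : Subgroup G) := by
  have h : H.subgroupOf N = (N ⊓ H).subgroupOf N := by
    ext x
    simp [Subgroup.mem_subgroupOf, x.2]
  show (H.subgroupOf N).index = _
  rw [h, Subgroup.index_eq_card, card_quot_div _ _ inf_le_left]

theorem stab_smul {G Ω : Type*} [Group G] [MulAction G Ω] (g : G) (α : Ω) :
    MulAction.stabilizer G (g • α) = conjSubgroup g (MulAction.stabilizer G α) :=
  MulAction.stabilizer_smul_eq_stabilizer_map_conj g α

theorem card_class {G Ω : Type*} [Group G] [Finite G] [Finite Ω] [MulAction G Ω]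
    (α : Ω) (H : Subgroup G) (hH : H = MulAction.stabilizer G α)
    (K R : Subgroup G) (g₀ : G) (hg₀ : conjSubgroup g₀ K = R) :
    Nat.card {ω : Ω // ∃ g, g • α = ω ∧ conjSubgroup g⁻¹ K = R} =
      Nat.card (Subgroup.normalizer (R : Set G)) / Nat.card ((Subgroup.normalizer (R : Set G)) ⊓ H : Subgroup G) := by
  set M : Subgroup G := (Subgroup.normalizer (K : Set G)) with hM
  set ω₀ : Ω := g₀⁻¹ • α with hω₀
  -- the subtype is the orbit of ω₀ under M
  have hset : ∀ ω : Ω, (∃ g, g • α = ω ∧ conjSubgroup g⁻¹ K = R) ↔ ω ∈ MulAction.orbit M ω₀ := by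
    intro ω
    rw [MulAction.mem_orbit_iff]
    constructor
    · rintro ⟨g, rfl, hg⟩
      refine ⟨⟨g * g₀, ?_⟩, ?_⟩
      · rw [← conjSubgroup_eq_iff_mem_normalizer, ← conjSubgroup_conjSubgroup]
        rw [← hg₀] at hg
        rw [← hg]
        exact conjSubgroup_conjSubgroup_inv g K
      · show (g * g₀) • ω₀ = g • α
        rw [hω₀, smul_smul, mul_assoc, mul_inv_cancel, mul_one]
    · rintro ⟨⟨m, hm⟩, rfl⟩
      refine ⟨m * g₀⁻¹, ?_, ?_⟩
      · show (m * g₀⁻¹) • α = (⟨m, hm⟩ : M) • ω₀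
        show (m * g₀⁻¹) • α = m • ω₀
        rw [hω₀, smul_smul]
      · have hmK : conjSubgroup m⁻¹ K = K :=
          conjSubgroup_eq_iff_mem_normalizer.2 (inv_mem hm)
        rw [mul_inv_rev, inv_inv, ← conjSubgroup_conjSubgroup, hmK, hg₀]
  have e1 : {ω : Ω // ∃ g, g • α = ω ∧ conjSubgroup g⁻¹ K = R} ≃ MulAction.orbit M ω₀ :=
    Equiv.subtypeEquivRight hset
  rw [Nat.card_congr e1, Nat.card_congr (MulAction.orbitEquivQuotientStabilizer M ω₀)]
  have hstab : MulAction.stabilizer M ω₀ = (M ⊓ MulAction.stabilizer G ω₀).subgroupOf M := by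
    ext ⟨m, hm⟩
    simp [MulAction.mem_stabilizer_iff, Subgroup.mem_subgroupOf, Subgroup.mem_inf, hm,
      Subgroup.smul_def]
  rw [hstab, card_quot_div _ _ inf_le_left]
  have hRN : (Subgroup.normalizer (R : Set G)) = conjSubgroup g₀ M := by
    rw [← hg₀, normalizer_conjSubgroup]
  have hstabω : MulAction.stabilizer G ω₀ = conjSubgroup g₀⁻¹ H := by
    rw [hω₀, stab_smul, hH]
  have h2 : M ⊓ MulAction.stabilizer G ω₀ = conjSubgroup g₀⁻¹ ((Subgroup.normalizer (R : Set G)) ⊓ H) := by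
    rw [conjSubgroup_inf, hRN, conjSubgroup_inv_conjSubgroup, hstabω]
  rw [h2, card_conjSubgroup, hRN, card_conjSubgroup]

end Counting

theorem stmt19 {G Ω : Type*} [Group G] [Finite G] [Finite Ω] [MulAction G Ω]
    (htrans : MulAction.IsPretransitive G Ω) (α : Ω)
    (H : Subgroup G) (hH : H = MulAction.stabilizer G α)
    (K : Subgroup G) (hKH : K ≤ H)
    (t : ℕ) (reps : Fin t → Subgroup G)
    (hreps : ∀ i : Fin t, (∃ g : G, conjSubgroup g K = reps i) ∧ reps i ≤ H)
    (hclasses : ∀ L : Subgroup G, (∃ g : G, conjSubgroup g K = L) → L ≤ H →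
      ∃! i : Fin t, ∃ h ∈ H, conjSubgroup h (reps i) = L) :
    Nat.card {ω : Ω // ∀ x ∈ K, x • ω = ω} =
      (∑ i : Fin t,
        Nat.card (Subgroup.normalizer (reps i : Set G)) / Nat.card ((Subgroup.normalizer (reps i : Set G) ⊓ H : Subgroup G))) ∧
    (t = 1 → Nat.card {ω : Ω // ∀ x ∈ K, x • ω = ω} = H.relIndex (Subgroup.normalizer (K : Set G))) := by
  classical
  have P_fix : ∀ (i : Fin t) (ω : Ω),
      (∃ g, g • α = ω ∧ conjSubgroup g⁻¹ K = reps i) → ∀ x ∈ K, x • ω = ω := by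
    rintro i ω ⟨g, rfl, hg⟩ x hx
    have h1 : g⁻¹ * x * g ∈ reps i := by
      rw [← hg, mem_conjSubgroup, inv_inv]
      have : g * (g⁻¹ * x * g) * g⁻¹ = x := by group
      rwa [this]
    have h2 : (g⁻¹ * x * g) • α = α := by
      have := (hreps i).2 h1
      rw [hH] at this
      exact this
    calc x • g • α = (g * (g⁻¹ * x * g)) • α := by rw [show g * (g⁻¹ * x * g) = x * g by group,
          ← smul_smul]
      _ = g • (g⁻¹ * x * g) • α := by rw [← smul_smul]
      _ = g • α := by rw [h2]
  have exu : ∀ ω : Ω, (∀ x ∈ K, x • ω = ω) →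
      ∃! i : Fin t, ∃ g, g • α = ω ∧ conjSubgroup g⁻¹ K = reps i := by
    intro ω hω
    obtain ⟨g, hg⟩ := htrans.exists_smul_eq α ω
    have hle : conjSubgroup g⁻¹ K ≤ H := by
      intro y hy
      rw [mem_conjSubgroup, inv_inv] at hy
      have hyα : y • α = α := by
        have h3 : (g * y * g⁻¹) • ω = ω := hω _ hy
        have h4 : y • (g⁻¹ • ω) = g⁻¹ • ((g * y * g⁻¹) • ω) := by
          rw [smul_smul, smul_smul, show g⁻¹ * (g * y * g⁻¹) = y * g⁻¹ by group]
        calc y • α = y • (g⁻¹ • ω) := by rw [← hg, inv_smul_smul]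
          _ = g⁻¹ • ((g * y * g⁻¹) • ω) := h4
          _ = g⁻¹ • ω := by rw [h3]
          _ = α := by rw [← hg, inv_smul_smul]
      rw [hH]
      exact hyα
    obtain ⟨i, ⟨h, hh, hhi⟩, huniq⟩ := hclasses (conjSubgroup g⁻¹ K) ⟨g⁻¹, rfl⟩ hle
    refine ⟨i, ⟨g * h, ?_, ?_⟩, ?_⟩
    · have hhα : h • α = α := by rw [hH] at hh; exact hh
      rw [← smul_smul, hhα, hg]
    · rw [mul_inv_rev, ← conjSubgroup_conjSubgroup, ← hhi, conjSubgroup_inv_conjSubgroup]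
    · rintro j ⟨g₁, hg₁α, hg₁⟩
      apply huniq j
      refine ⟨g⁻¹ * g₁, ?_, ?_⟩
      · rw [hH]
        show (g⁻¹ * g₁) • α = α
        rw [← smul_smul, hg₁α, ← hg, inv_smul_smul]
      · rw [← conjSubgroup_conjSubgroup, ← hg₁, conjSubgroup_conjSubgroup_inv]
  have spec : ∀ ω : {ω : Ω // ∀ x ∈ K, x • ω = ω},
      ∃! i : Fin t, ∃ g, g • α = ω.1 ∧ conjSubgroup g⁻¹ K = reps i :=
    fun ω => exu ω.1 ω.2
  set c : {ω : Ω // ∀ x ∈ K, x • ω = ω} → Fin t := fun ω => (spec ω).choose with hc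
  have hc1 : ∀ ω, ∃ g, g • α = ω.1 ∧ conjSubgroup g⁻¹ K = reps (c ω) :=
    fun ω => (spec ω).choose_spec.1
  have hc2 : ∀ ω (j : Fin t), (∃ g, g • α = ω.1 ∧ conjSubgroup g⁻¹ K = reps j) → j = c ω :=
    fun ω j h => (spec ω).choose_spec.2 j h
  have e2 : ∀ i : Fin t, {x : {ω : Ω // ∀ x ∈ K, x • ω = ω} // c x = i} ≃
      {ω : Ω // ∃ g, g • α = ω ∧ conjSubgroup g⁻¹ K = reps i} := fun i =>
    { toFun := fun x => ⟨x.1.1, by have := hc1 x.1; rw [x.2] at this; exact this⟩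
      invFun := fun y => ⟨⟨y.1, P_fix i y.1 y.2⟩, (hc2 ⟨y.1, P_fix i y.1 y.2⟩ i y.2).symm⟩
      left_inv := fun x => Subtype.ext (Subtype.ext rfl)
      right_inv := fun y => Subtype.ext rfl }
  have main1 : Nat.card {ω : Ω // ∀ x ∈ K, x • ω = ω} =
      ∑ i : Fin t,
        Nat.card ((Subgroup.normalizer ((reps i) : Set G))) / Nat.card (((Subgroup.normalizer ((reps i) : Set G)) ⊓ H : Subgroup G)) := by
    rw [nat_card_fibers c]
    refine Finset.sum_congr rfl fun i _ => ?_
    rw [Nat.card_congr (e2 i)]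
    exact card_class α H hH K (reps i) (hreps i).1.choose (hreps i).1.choose_spec
  refine ⟨main1, fun ht => ?_⟩
  subst ht
  rw [main1, Fin.sum_univ_one, relIndex_eq_div]
  obtain ⟨i, ⟨h, hh, hhK⟩, _⟩ := hclasses K ⟨1, conjSubgroup_one K⟩ hKH
  have hi : i = 0 := Subsingleton.elim i 0
  rw [hi] at hhK
  have hn : (Subgroup.normalizer (K : Set G)) = conjSubgroup h (Subgroup.normalizer ((reps 0) : Set G)) := by
    rw [← hhK, normalizer_conjSubgroup]
  have hHh : conjSubgroup h H = H :=
    conjSubgroup_eq_iff_mem_normalizer.2 (Subgroup.le_normalizer hh)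
  have hinf : (Subgroup.normalizer (K : Set G)) ⊓ H = conjSubgroup h ((Subgroup.normalizer ((reps 0) : Set G)) ⊓ H) := by
    rw [conjSubgroup_inf, hn, hHh]
  rw [hinf, hn, card_conjSubgroup, card_conjSubgroup]
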